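/- Let 0 < κ₁ < ⋯ < κₘ < x̄ and suppose there is a probability measure μ on [0, x̄] whose support contains {0, κ₁,…,κₘ, x̄} and such that the call and put prices are consistent: π̲ⱼᶜ ≤ ∫(x−κⱼ)⁺ dμ ≤ π̄ⱼᶜ and π̲ⱼᵖ ≤ ∫(κⱼ−x)⁺ dμ ≤ π̄ⱼᵖ for all j, where π̲ⱼᶜ < π̄ⱼᶜ and π̲ⱼᵖ < π̄ⱼᵖ. Then no arbitrage exists among these options: for any portfolio weights (yⱼᶜ, yⱼᵖ)ⱼ for which the payoff Σⱼ[yⱼᶜ(x−κⱼ)⁺ + yⱼᵖ(κⱼ−x)⁺] minus the portfolio price π(y) = Σⱼ[(yⱼᶜ∨0)π̄ⱼᶜ − ((−yⱼᶜ)∨0)π̲ⱼᶜ + (yⱼᵖ∨0)π̄ⱼᵖ − ((−yⱼᵖ)∨0)π̲ⱼᵖ] is nonnegative for all x ∈ ℝ₊, it is identically zero on ℝ₊. -/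

import Mathlib

open MeasureTheory

lemma interp_call (κ a b x : ℝ) (hab : a ≤ b)
    (h : (κ ≤ a ∧ κ ≤ x) ∨ (x ≤ κ ∧ a ≤ κ ∧ b ≤ κ)) :
    max (x - κ) 0 * (b - a) = (b - x) * max (a - κ) 0 + (x - a) * max (b - κ) 0 := by
  rcases h with ⟨h1, h2⟩ | ⟨h1, h2, h3⟩
  · rw [max_eq_left (by linarith), max_eq_left (by linarith), max_eq_left (by linarith)]
    ring
  · rw [max_eq_right (by linarith), max_eq_right (by linarith), max_eq_right (by linarith)]
    ring

lemma interp_put (κ a b x : ℝ) (hab : a ≤ b)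
    (h : (κ ≤ a ∧ κ ≤ x) ∨ (x ≤ κ ∧ a ≤ κ ∧ b ≤ κ)) :
    max (κ - x) 0 * (b - a) = (b - x) * max (κ - a) 0 + (x - a) * max (κ - b) 0 := by
  rcases h with ⟨h1, h2⟩ | ⟨h1, h2, h3⟩
  · rw [max_eq_right (by linarith), max_eq_right (by linarith), max_eq_right (by linarith)]
    ring
  · rw [max_eq_left (by linarith), max_eq_left (by linarith), max_eq_left (by linarith)]
    ring

lemma zero_at_mass_point (μ : Measure ℝ) (f : ℝ → ℝ) (hf : Continuous f)
    (h0 : ∀ᵐ x ∂μ, f x = 0) (p : ℝ) (hp : ∀ ε : ℝ, 0 < ε → 0 < μ (Metric.ball p ε)) :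
    f p = 0 := by
  by_contra hne
  have hpos : 0 < |f p| := abs_pos.mpr hne
  obtain ⟨δ, hδ, hball⟩ := Metric.continuousAt_iff.mp hf.continuousAt |f p| hpos
  have hsub : Metric.ball p δ ⊆ {x | ¬ f x = 0} := by
    intro x hx
    simp only [Set.mem_setOf_eq]
    intro hfx
    have := hball (Metric.mem_ball.mp hx)
    rw [hfx] at this
    simp [Real.dist_eq] at this
  have : μ (Metric.ball p δ) = 0 :=
    measure_mono_null hsub (ae_iff.mp h0)
  exact absurd this (hp δ hδ).ne'

/-- If call and put prices (with bid < ask) at strikes 0 < κ₁ < ⋯ < κₘ < x̄ are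
consistent with a probability measure on [0,x̄] whose support contains 0, the
strikes, and x̄, then any portfolio whose payoff minus price is nonnegative on ℝ₊
has payoff minus price identically zero on ℝ₊ (no arbitrage). -/
theorem stmt18 (m : ℕ) (xbar : ℝ) (κ : Fin m → ℝ) (hκ : StrictMono κ)
    (hκpos : ∀ j, 0 < κ j) (hκlt : ∀ j, κ j < xbar)
    (bidc askc bidp askp : Fin m → ℝ)
    (hc : ∀ j, bidc j < askc j) (hp : ∀ j, bidp j < askp j)
    (μ : Measure ℝ) [IsProbabilityMeasure μ]
    (hμbox : μ (Set.Icc 0 xbar)ᶜ = 0)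
    (hs0 : ∀ ε : ℝ, 0 < ε → 0 < μ (Metric.ball 0 ε))
    (hsx : ∀ ε : ℝ, 0 < ε → 0 < μ (Metric.ball xbar ε))
    (hsk : ∀ j, ∀ ε : ℝ, 0 < ε → 0 < μ (Metric.ball (κ j) ε))
    (hpc : ∀ j, bidc j ≤ ∫ x, max (x - κ j) 0 ∂μ ∧
      ∫ x, max (x - κ j) 0 ∂μ ≤ askc j)
    (hpp : ∀ j, bidp j ≤ ∫ x, max (κ j - x) 0 ∂μ ∧
      ∫ x, max (κ j - x) 0 ∂μ ≤ askp j) :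
    ∀ yc yp : Fin m → ℝ,
      (∀ x : ℝ, 0 ≤ x →
        0 ≤ (∑ j, (yc j * max (x - κ j) 0 + yp j * max (κ j - x) 0)) -
          ∑ j, (max (yc j) 0 * askc j - max (-(yc j)) 0 * bidc j
              + max (yp j) 0 * askp j - max (-(yp j)) 0 * bidp j)) →
      ∀ x : ℝ, 0 ≤ x →
        (∑ j, (yc j * max (x - κ j) 0 + yp j * max (κ j - x) 0)) -
          ∑ j, (max (yc j) 0 * askc j - max (-(yc j)) 0 * bidc j
              + max (yp j) 0 * askp j - max (-(yp j)) 0 * bidp j) = 0 := by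
  intro yc yp harb
  set price : ℝ := ∑ j, (max (yc j) 0 * askc j - max (-(yc j)) 0 * bidc j
      + max (yp j) 0 * askp j - max (-(yp j)) 0 * bidp j) with hprice
  set f : ℝ → ℝ := fun x =>
    (∑ j, (yc j * max (x - κ j) 0 + yp j * max (κ j - x) 0)) - price with hf
  show ∀ x : ℝ, 0 ≤ x → f x = 0
  -- continuity
  have hcont : Continuous f := by
    apply Continuous.sub _ continuous_const
    apply continuous_finset_sum
    intro j _
    exact ((continuous_const.mul ((continuous_id.sub continuous_const).max
      continuous_const)).add (continuous_const.mul
      ((continuous_const.sub continuous_id).max continuous_const)))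
  -- a.e. support
  have hae : ∀ᵐ x ∂μ, x ∈ Set.Icc (0:ℝ) xbar := by
    rw [ae_iff]
    convert hμbox using 2
    rfl
  -- integrability of call/put payoffs
  have hmc : ∀ j, AEStronglyMeasurable (fun x : ℝ => max (x - κ j) 0) μ :=
    fun j => ((continuous_id.sub continuous_const).max continuous_const).aestronglyMeasurable
  have hmp : ∀ j, AEStronglyMeasurable (fun x : ℝ => max (κ j - x) 0) μ :=
    fun j => ((continuous_const.sub continuous_id).max continuous_const).aestronglyMeasurable
  have hintc : ∀ j, Integrable (fun x : ℝ => max (x - κ j) 0) μ := by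
    intro j
    refine (integrable_const (max xbar 0)).mono' (hmc j) ?_
    filter_upwards [hae] with x hx
    rw [Real.norm_eq_abs, abs_of_nonneg (le_max_right _ _)]
    have := hκpos j
    rcases hx with ⟨h1, h2⟩
    rcases le_total (x - κ j) 0 with h | h
    · rw [max_eq_right h]; exact le_max_right _ _
    · rw [max_eq_left h]; exact le_trans (by linarith) (le_max_left _ _)
  have hintp : ∀ j, Integrable (fun x : ℝ => max (κ j - x) 0) μ := by
    intro j
    refine (integrable_const (max xbar 0)).mono' (hmp j) ?_
    filter_upwards [hae] with x hx
    rw [Real.norm_eq_abs, abs_of_nonneg (le_max_right _ _)]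
    have := hκlt j
    rcases hx with ⟨h1, h2⟩
    rcases le_total (κ j - x) 0 with h | h
    · rw [max_eq_right h]; exact le_max_right _ _
    · rw [max_eq_left h]; exact le_trans (by linarith) (le_max_left _ _)
  have hintterm : ∀ j : Fin m, Integrable
      (fun x : ℝ => yc j * max (x - κ j) 0 + yp j * max (κ j - x) 0) μ :=
    fun j => ((hintc j).const_mul _).add ((hintp j).const_mul _)
  have hintpay : Integrable
      (fun x : ℝ => ∑ j, (yc j * max (x - κ j) 0 + yp j * max (κ j - x) 0)) μ :=
    integrable_finset_sum _ (fun j _ => hintterm j)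
  have hintf : Integrable f μ := hintpay.sub (integrable_const _)
  -- integral of f
  have hIpay : ∫ x, (∑ j, (yc j * max (x - κ j) 0 + yp j * max (κ j - x) 0)) ∂μ
      = ∑ j, (yc j * ∫ x, max (x - κ j) 0 ∂μ + yp j * ∫ x, max (κ j - x) 0 ∂μ) := by
    rw [integral_finset_sum _ (fun j _ => hintterm j)]
    refine Finset.sum_congr rfl fun j _ => ?_
    rw [integral_add ((hintc j).const_mul _) ((hintp j).const_mul _),
      integral_const_mul, integral_const_mul]
  have hIf : ∫ x, f x ∂μ
      = (∑ j, (yc j * ∫ x, max (x - κ j) 0 ∂μ + yp j * ∫ x, max (κ j - x) 0 ∂μ)) - price := by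
    rw [hf]
    rw [integral_sub hintpay (integrable_const _), hIpay, integral_const]
    simp
  -- integral ≤ 0
  have hle : ∫ x, f x ∂μ ≤ 0 := by
    rw [hIf, sub_nonpos, hprice]
    refine Finset.sum_le_sum fun j _ => ?_
    have h1 : yc j * ∫ x, max (x - κ j) 0 ∂μ
        ≤ max (yc j) 0 * askc j - max (-(yc j)) 0 * bidc j := by
      rcases le_total 0 (yc j) with h | h
      · rw [max_eq_left h, max_eq_right (by linarith)]
        have := mul_le_mul_of_nonneg_left (hpc j).2 h
        linarith
      · rw [max_eq_right h, max_eq_left (by linarith)]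
        have := mul_le_mul_of_nonpos_left (hpc j).1 h
        linarith
    have h2 : yp j * ∫ x, max (κ j - x) 0 ∂μ
        ≤ max (yp j) 0 * askp j - max (-(yp j)) 0 * bidp j := by
      rcases le_total 0 (yp j) with h | h
      · rw [max_eq_left h, max_eq_right (by linarith)]
        have := mul_le_mul_of_nonneg_left (hpp j).2 h
        linarith
      · rw [max_eq_right h, max_eq_left (by linarith)]
        have := mul_le_mul_of_nonpos_left (hpp j).1 h
        linarith
    linarith
  -- f ≥ 0 a.e.
  have hfnn : 0 ≤ᵐ[μ] f := by
    filter_upwards [hae] with x hx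
    exact harb x hx.1
  have hInn : 0 ≤ ∫ x, f x ∂μ := integral_nonneg_of_ae hfnn
  have hI0 : ∫ x, f x ∂μ = 0 := le_antisymm hle hInn
  have hfae0 : ∀ᵐ x ∂μ, f x = 0 := by
    have := (integral_eq_zero_iff_of_nonneg_ae hfnn hintf).mp hI0
    filter_upwards [this] with x hx
    exact hx
  -- f vanishes at support points
  have hf0 : f 0 = 0 := zero_at_mass_point μ f hcont hfae0 0 hs0
  have hfx : f xbar = 0 := zero_at_mass_point μ f hcont hfae0 xbar hsx
  have hfk : ∀ j, f (κ j) = 0 := fun j => zero_at_mass_point μ f hcont hfae0 (κ j) (hsk j)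
  -- key affine interpolation
  have key : ∀ x a b : ℝ, a < b →
      (∀ j, (κ j ≤ a ∧ κ j ≤ x) ∨ (x ≤ κ j ∧ a ≤ κ j ∧ b ≤ κ j)) →
      f a = 0 → f b = 0 → f x = 0 := by
    intro x a b hab hcond ha hb
    have hpaya : (∑ j, (yc j * max (a - κ j) 0 + yp j * max (κ j - a) 0)) = price := by
      have := ha; rw [hf] at this; simp only [sub_eq_zero] at this; exact this
    have hpayb : (∑ j, (yc j * max (b - κ j) 0 + yp j * max (κ j - b) 0)) = price := by
      have := hb; rw [hf] at this; simp only [sub_eq_zero] at this; exact this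
    have hsum : (∑ j, (yc j * max (x - κ j) 0 + yp j * max (κ j - x) 0)) * (b - a)
        = (b - x) * (∑ j, (yc j * max (a - κ j) 0 + yp j * max (κ j - a) 0))
          + (x - a) * (∑ j, (yc j * max (b - κ j) 0 + yp j * max (κ j - b) 0)) := by
      rw [Finset.sum_mul, Finset.mul_sum, Finset.mul_sum, ← Finset.sum_add_distrib]
      refine Finset.sum_congr rfl fun j _ => ?_
      have hcj := interp_call (κ j) a b x hab.le (hcond j)
      have hpj := interp_put (κ j) a b x hab.le (hcond j)
      linear_combination yc j * hcj + yp j * hpj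
    rw [hpaya, hpayb] at hsum
    have hfx : f x * (b - a) = 0 := by
      rw [hf]
      simp only
      rw [sub_mul, hsum]
      ring
    have := mul_eq_zero.mp hfx
    rcases this with h | h
    · exact h
    · linarith
  -- main case analysis
  intro x hx
  rcases Nat.eq_zero_or_pos m with hm | hm
  · subst hm
    simp [hf, hprice]
  · have h0m : (0:ℕ) < m := hm
    set j0 : Fin m := ⟨0, h0m⟩ with hj0
    rcases lt_or_ge x (κ j0) with hcase | hcase
    · -- x below all strikes: interval [0, κ j0]
      refine key x 0 (κ j0) (hκpos j0) (fun j => Or.inr ⟨?_, (hκpos j).le, ?_⟩) hf0 (hfk j0)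
      · exact le_trans hcase.le (hκ.monotone (show j0 ≤ j by simp [hj0, Fin.le_def]))
      · exact hκ.monotone (show j0 ≤ j by simp [hj0, Fin.le_def])
    · -- there is a largest strike ≤ x
      have hne : (Finset.univ.filter (fun j : Fin m => κ j ≤ x)).Nonempty :=
        ⟨j0, by simp [hcase]⟩
      set j1 : Fin m := (Finset.univ.filter (fun j : Fin m => κ j ≤ x)).max' hne with hj1
      have hj1mem : κ j1 ≤ x := by
        have := (Finset.univ.filter (fun j : Fin m => κ j ≤ x)).max'_mem hne
        simpa using this
      have hj1max : ∀ j : Fin m, κ j ≤ x → j ≤ j1 := by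
        intro j hj
        exact Finset.le_max' _ j (by simp [hj])
      by_cases hlast : j1.1 + 1 < m
      · set j2 : Fin m := ⟨j1.1 + 1, hlast⟩ with hj2
        have hxlt : x < κ j2 := by
          by_contra hle2
          push_neg at hle2
          have := hj1max j2 hle2
          simp [hj2, Fin.le_def] at this
        refine key x (κ j1) (κ j2) (hκ (by simp [hj2, Fin.lt_def])) (fun j => ?_)
          (hfk j1) (hfk j2)
        rcases le_or_gt (κ j) x with hj | hj
        · exact Or.inl ⟨hκ.monotone (hj1max j hj), hj⟩
        · refine Or.inr ⟨hj.le, ?_, ?_⟩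
          · -- a = κ j1 ≤ κ j since j1 < j
            have : j1 < j := by
              by_contra hjj
              push_neg at hjj
              exact absurd (le_trans (hκ.monotone hjj) hj1mem) (not_le.mpr hj)
            exact (hκ this).le
          · -- b = κ j2 ≤ κ j since j2 ≤ j
            have : j1 < j := by
              by_contra hjj
              push_neg at hjj
              exact absurd (le_trans (hκ.monotone hjj) hj1mem) (not_le.mpr hj)
            exact hκ.monotone (by simp [hj2, Fin.le_def]; omega)
      · -- j1 is the last index
        refine key x (κ j1) xbar (hκlt j1) (fun j => Or.inl ⟨?_, ?_⟩) (hfk j1) hfx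
        · have : j ≤ j1 := by
            rw [Fin.le_def]
            omega
          exact hκ.monotone this
        · have : j ≤ j1 := by
            rw [Fin.le_def]
            omega
          exact le_trans (hκ.monotone this) hj1mem
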